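/- Let S be an involutive algebra anti-automorphism of the matrix algebra M_n(ℂ). Then there exists an invertible matrix u such that S(x) = (u x u⁻¹)ᵀ for all x in M_n(ℂ). -/

import Mathlib

open Matrix

theorem stmt0 (n : ℕ) (S : Matrix (Fin n) (Fin n) ℂ →ₗ[ℂ] Matrix (Fin n) (Fin n) ℂ)
    (hmul : ∀ x y, S (x * y) = S y * S x) (hinvol : ∀ x, S (S x) = x) :
    ∃ u : Matrix (Fin n) (Fin n) ℂ, IsUnit u ∧ ∀ x, S x = (u * x * u⁻¹)ᵀ := by
  rcases Nat.eq_zero_or_pos n with hn | hn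
  · subst hn
    exact ⟨1, isUnit_one, fun x => Subsingleton.elim _ _⟩
  have i0 : Fin n := ⟨0, hn⟩
  have hSinj : Function.Injective S := Function.LeftInverse.injective hinvol
  -- f i j : images of matrix units under x ↦ (S x)ᵀ
  set f : Fin n → Fin n → Matrix (Fin n) (Fin n) ℂ :=
    fun i j => (S (Matrix.single i j 1))ᵀ with hf
  have hφmul : ∀ x y, (S (x * y))ᵀ = (S x)ᵀ * (S y)ᵀ := by
    intro x y; rw [hmul, transpose_mul]
  have hfmul : ∀ i j k l, f i j * f k l = if j = k then f i l else 0 := by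
    intro i j k l
    simp only [hf]
    rw [← hφmul]
    by_cases h : j = k
    · subst h
      rw [single_mul_single_same, one_mul, if_pos rfl]
    · rw [single_mul_single_of_ne (h := h), if_neg h, map_zero, transpose_zero]
  -- f i0 i0 is a nonzero idempotent
  have hf00 : f i0 i0 ≠ 0 := by
    intro h
    have h1 : S (Matrix.single i0 i0 (1:ℂ)) = 0 := transpose_eq_zero.mp h
    have h2 : Matrix.single i0 i0 (1:ℂ) = 0 := by
      apply hSinj; rw [h1, map_zero]
    have := congrFun (congrFun h2 i0) i0
    simp [Matrix.single] at this
  obtain ⟨a, b, hab⟩ : ∃ a b, f i0 i0 a b ≠ 0 := by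
    by_contra h
    push_neg at h
    exact hf00 (by ext a b; simpa using h a b)
  set w : Fin n → ℂ := fun i => f i0 i0 i b with hw
  have hwne : w ≠ 0 := by
    intro h
    exact hab (by simpa [hw] using congrFun h a)
  have hfw : ∀ i j, (f i j) *ᵥ w = fun a => (f i j * f i0 i0) a b := by
    intro i j
    funext c
    simp [hw, mulVec, dotProduct, mul_apply]
  have hf00w : f i0 i0 *ᵥ w = w := by
    rw [hfw, hfmul]
    simp [hw]
  set u : Matrix (Fin n) (Fin n) ℂ := Matrix.of fun a k => (f k i0 *ᵥ w) a with hu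
  -- key commutation on matrix units
  have hcolmul : ∀ (M : Matrix (Fin n) (Fin n) ℂ) a c, (M * u) a c = (M *ᵥ (f c i0 *ᵥ w)) a := by
    intro M a c
    simp [hu, mul_apply, mulVec, dotProduct]
  have hkey0 : ∀ i j, f i j * u = u * Matrix.single i j 1 := by
    intro i j
    ext a c
    rw [hcolmul, mulVec_mulVec, hfmul]
    by_cases h : j = c
    · subst h
      rw [if_pos rfl]
      simp [hu]
    · rw [if_neg h, zero_mulVec]
      have hc : c ≠ j := fun hc => h hc.symm
      simp [mul_apply, Matrix.single, hc.symm]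
  -- key commutation for all x, by linearity
  have hkey : ∀ x, (S x)ᵀ * u = u * x := by
    intro x
    conv_lhs => rw [matrix_eq_sum_single x]
    conv_rhs => rw [matrix_eq_sum_single x]
    rw [map_sum, Finset.mul_sum]
    simp only [map_sum, transpose_sum, Finset.sum_mul, Finset.mul_sum]
    refine Finset.sum_congr rfl fun i _ => Finset.sum_congr rfl fun j _ => ?_
    have hsm : Matrix.single i j (x i j) = x i j • Matrix.single i j (1:ℂ) := by
      rw [smul_single, smul_eq_mul, mul_one]
    rw [hsm, LinearMap.map_smul, transpose_smul, smul_mul_assoc, mul_smul_comm]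
    congr 1
    exact hkey0 i j
  -- u is invertible
  have hdet : u.det ≠ 0 := by
    intro hdet
    obtain ⟨v, hv, huv⟩ := (Matrix.exists_mulVec_eq_zero_iff).2 hdet
    apply hv
    funext j
    have h1 : (f i0 j * u) *ᵥ v = 0 := by
      rw [← mulVec_mulVec, huv, mulVec_zero]
    rw [hkey0, ← mulVec_mulVec] at h1
    have h2 : Matrix.single i0 j (1:ℂ) *ᵥ v = Pi.single i0 (v j) := by
      rw [single_mulVec]
      simp [Function.update, Pi.single, eq_comm]
    rw [h2] at h1
    have h3 : u *ᵥ Pi.single i0 (v j) = v j • (f i0 i0 *ᵥ w) := by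
      funext c
      simp [hu, mulVec, dotProduct, Pi.single_apply, mul_comm]
    rw [h3, hf00w] at h1
    rcases smul_eq_zero.mp h1 with h | h
    · simpa using h
    · exact absurd h hwne
  have hu' : IsUnit u := (Matrix.isUnit_iff_isUnit_det u).2 (Ne.isUnit hdet)
  refine ⟨u, hu', fun x => ?_⟩
  have h1 : (S x)ᵀ = u * x * u⁻¹ := by
    calc (S x)ᵀ = (S x)ᵀ * (u * u⁻¹) := by rw [Matrix.mul_nonsing_inv u hdet.isUnit, mul_one]
    _ = ((S x)ᵀ * u) * u⁻¹ := by rw [mul_assoc]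
    _ = u * x * u⁻¹ := by rw [hkey]
  rw [← h1, transpose_transpose]
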